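/- Let τ be a nonempty index set and let A ⊆ ℂ be nonempty and conjugate invariant (i.e., conj(λ) ∈ A for every λ ∈ A). Suppose 0 is not a limit point of A, i.e., there exists δ > 0 such that every z ∈ A satisfies z = 0 or |z| ≥ δ. Let S be the set of all finite sums of (A ∪ {0})-weighted generalized shift operators on ℓ²(τ). Then S is adjoint invariant: for every T ∈ S, the adjoint T* belongs to S. -/

import Mathlib

/-- An `A`-weighted generalized shift operator on `ℓ²(τ)`: a bounded operator that acts as
`x ↦ (u_α · x_{φ(α)})_α` for some self-map `φ : τ → τ` and weights `u` with values in `A`. -/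
def IsWGSOp {τ : Type*} (A : Set ℂ)
    (T : lp (fun _ : τ => ℂ) 2 →L[ℂ] lp (fun _ : τ => ℂ) 2) : Prop :=
  ∃ (φ : τ → τ) (u : τ → ℂ), (∀ α, u α ∈ A) ∧
    ∀ (x : lp (fun _ : τ => ℂ) 2) (α : τ), T x α = u α * x (φ α)

/-- The additive semigroup generated by `A`-weighted generalized shift operators on `ℓ²(τ)`:
the set of all (nonempty) finite sums of such operators. -/
def WGSSemigroup {τ : Type*} (A : Set ℂ) :
    Set (lp (fun _ : τ => ℂ) 2 →L[ℂ] lp (fun _ : τ => ℂ) 2) :=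
  {T | ∃ (m : ℕ) (S : Fin m → (lp (fun _ : τ => ℂ) 2 →L[ℂ] lp (fun _ : τ => ℂ) 2)),
    0 < m ∧ (∀ i, IsWGSOp A (S i)) ∧ T = ∑ i, S i}

open scoped ComplexConjugate ENNReal

noncomputable section

abbrev Hsp (τ : Type*) := lp (fun _ : τ => ℂ) 2

lemma lp_sum_apply {τ ι : Type*} (s : Finset ι) (g : ι → Hsp τ) (β : τ) :
    (((∑ i ∈ s, g i : Hsp τ) : ∀ _ : τ, ℂ) β) = ∑ i ∈ s, g i β := by
  classical
  induction s using Finset.induction_on with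
  | empty => simp [lp.coeFn_zero]
  | @insert _ _ h ih =>
    rw [Finset.sum_insert h, Finset.sum_insert h, ← ih]
    simp [lp.coeFn_add]

lemma single_coord {τ : Type*} [DecidableEq τ] (β γ : τ) :
    (lp.single 2 β (1:ℂ) : Hsp τ) γ = if γ = β then 1 else 0 := by
  rw [lp.single_apply]
  split_ifs with h
  · subst h; simp
  · simp [h]

lemma coord_eq_inner {τ : Type*} [DecidableEq τ] (z : Hsp τ) (β : τ) :
    z β = @inner ℂ _ _ (lp.single 2 β (1:ℂ) : Hsp τ) z := by
  rw [lp.inner_single_left]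
  simp [RCLike.inner_apply]

lemma key_summable (ψ : τ → τ) (v : τ → ℂ) (C : ℝ) (hC : 0 ≤ C)
    (hv : ∀ β, ‖v β‖ ≤ C) (hinj : Set.InjOn ψ {β | v β ≠ 0}) (x : Hsp τ) :
    Summable (fun β => ‖v β * x (ψ β)‖ ^ (2:ℝ)) ∧
      ∑' β, ‖v β * x (ψ β)‖ ^ (2:ℝ) ≤ C ^ (2:ℝ) * ∑' α, ‖x α‖ ^ (2:ℝ) := by
  have hg : Summable (fun α => ‖x α‖ ^ (2:ℝ)) := by
    have := (lp.memℓp x).summable (p := 2) (by norm_num)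
    simpa using this
  set s : Set τ := {β | v β ≠ 0} with hs
  have h1 : Summable (fun β : s => ‖x (ψ β)‖ ^ (2:ℝ)) :=
    hg.comp_injective (fun a b hab => Subtype.ext (hinj a.2 b.2 hab))
  have hind : Summable (s.indicator (fun β => ‖x (ψ β)‖ ^ (2:ℝ))) :=
    (summable_subtype_iff_indicator).mp h1
  have hle : ∀ β, ‖v β * x (ψ β)‖ ^ (2:ℝ) ≤
      C ^ (2:ℝ) * s.indicator (fun β => ‖x (ψ β)‖ ^ (2:ℝ)) β := by
    intro β
    by_cases hβ : v β = 0
    · simp [hβ, Set.indicator, hs]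
    · rw [Set.indicator_of_mem (by exact hβ)]
      rw [norm_mul, Real.mul_rpow (norm_nonneg _) (norm_nonneg _)]
      exact mul_le_mul_of_nonneg_right
        (Real.rpow_le_rpow (norm_nonneg _) (hv β) (by norm_num))
        (Real.rpow_nonneg (norm_nonneg _) _)
  have hsum : Summable (fun β => ‖v β * x (ψ β)‖ ^ (2:ℝ)) := by
    refine Summable.of_nonneg_of_le (fun β => by positivity) hle ?_
    exact hind.mul_left _
  refine ⟨hsum, ?_⟩
  calc ∑' β, ‖v β * x (ψ β)‖ ^ (2:ℝ)
      ≤ ∑' β, C ^ (2:ℝ) * s.indicator (fun β => ‖x (ψ β)‖ ^ (2:ℝ)) β :=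
        Summable.tsum_le_tsum hle hsum (hind.mul_left _)
    _ = C ^ (2:ℝ) * ∑' β, s.indicator (fun β => ‖x (ψ β)‖ ^ (2:ℝ)) β := tsum_mul_left
    _ ≤ C ^ (2:ℝ) * ∑' α, ‖x α‖ ^ (2:ℝ) := by
        refine mul_le_mul_of_nonneg_left ?_ (Real.rpow_nonneg hC _)
        rw [← tsum_subtype_eq_of_support_subset (s := s)
          (f := fun β => s.indicator (fun β => ‖x (ψ β)‖ ^ (2:ℝ)) β)
          (Function.support_subset_iff'.mpr (fun β hβ => Set.indicator_of_notMem hβ _))]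
        rw [tsum_congr (fun β : s => Set.indicator_of_mem β.2 (fun β => ‖x (ψ β)‖ ^ (2:ℝ)))]
        exact Summable.tsum_le_tsum_of_inj (fun β : s => ψ β)
          (fun a b hab => Subtype.ext (hinj a.2 b.2 hab))
          (fun c _ => by positivity) (fun β => le_refl _) h1 hg

lemma exists_shift_clm (ψ : τ → τ) (v : τ → ℂ) (C : ℝ) (hC : 0 ≤ C)
    (hv : ∀ β, ‖v β‖ ≤ C) (hinj : Set.InjOn ψ {β | v β ≠ 0}) :
    ∃ S : Hsp τ →L[ℂ] Hsp τ, ∀ (x : Hsp τ) (β : τ), S x β = v β * x (ψ β) := by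
  have hmem : ∀ x : Hsp τ, Memℓp (fun β => v β * x (ψ β)) 2 := by
    intro x
    apply memℓp_gen
    have := (key_summable ψ v C hC hv hinj x).1
    simpa using this
  set L : Hsp τ →ₗ[ℂ] Hsp τ :=
    { toFun := fun x => ⟨fun β => v β * x (ψ β), hmem x⟩
      map_add' := by
        intro x y
        apply lp.ext  -- might not exist
        funext β
        simp [lp.coeFn_add, mul_add]
        rfl
      map_smul' := by
        intro c x
        apply lp.ext
        funext β
        simp [lp.coeFn_smul, Pi.smul_apply, smul_eq_mul]
        ring } with hL
  refine ⟨L.mkContinuous C ?_, fun x β => rfl⟩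
  intro x
  have hb := (key_summable ψ v C hC hv hinj x).2
  refine lp.norm_le_of_tsum_le (by norm_num) (by positivity) ?_
  have hnx : ∑' α, ‖x α‖ ^ (2:ℝ) = ‖x‖ ^ (2:ℝ) := by
    have := lp.norm_rpow_eq_tsum (p := 2) (by norm_num) x
    simpa using this.symm
  have : ∑' β, ‖(L x) β‖ ^ (2:ℝ) ≤ C ^ (2:ℝ) * ‖x‖ ^ (2:ℝ) := by
    rw [← hnx]; exact hb
  calc ∑' β, ‖(L x) β‖ ^ ((2:ℝ≥0∞).toReal) = ∑' β, ‖(L x) β‖ ^ (2:ℝ) := by norm_num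
    _ ≤ C ^ (2:ℝ) * ‖x‖ ^ (2:ℝ) := this
    _ = (C * ‖x‖) ^ ((2:ℝ≥0∞).toReal) := by
        rw [← Real.mul_rpow hC (norm_nonneg _)]; norm_num

set_option maxHeartbeats 1000000 in
lemma adjoint_single_mem {τ : Type*} [Nonempty τ] (A : Set ℂ)
    (hconj : ∀ z ∈ A, (starRingEnd ℂ) z ∈ A)
    (δ : ℝ) (hδ : 0 < δ) (h0 : ∀ z ∈ A, z = 0 ∨ δ ≤ ‖z‖)
    (T : Hsp τ →L[ℂ] Hsp τ) (hT : IsWGSOp (A ∪ {0}) T) :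
    ContinuousLinearMap.adjoint T ∈ WGSSemigroup (τ := τ) (A ∪ {0}) := by
  classical
  obtain ⟨φ, u, huA, hTx⟩ := hT
  -- nonzero weights are ≥ δ
  have hδ' : ∀ α, u α ≠ 0 → δ ≤ ‖u α‖ := by
    intro α h
    rcases huA α with h' | h'
    · rcases h0 _ h' with h'' | h''
      · exact absurd h'' h
      · exact h''
    · exact absurd h' h
  set e : τ → Hsp τ := fun β => lp.single 2 β (1:ℂ) with he
  have hne : ∀ β, ‖e β‖ = 1 := by
    intro β
    have := lp.norm_single (p := 2) (E := fun _ : τ => ℂ) (by norm_num) β (1:ℂ)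
    exact this.trans norm_one
  have hTe : ∀ β α, (T (e β)) α = if φ α = β then u α else 0 := by
    intro β α
    rw [hTx (e β) α, he]
    simp only [single_coord]
    split_ifs <;> simp
  -- weights bounded by ‖T‖
  have hub : ∀ α, ‖u α‖ ≤ ‖T‖ := by
    intro α
    have h1 : (T (e (φ α))) α = u α := by rw [hTe]; simp
    calc ‖u α‖ = ‖(T (e (φ α))) α‖ := by rw [h1]
      _ ≤ ‖T (e (φ α))‖ := lp.norm_apply_le_norm (by norm_num) _ _
      _ ≤ ‖T‖ * ‖e (φ α)‖ := T.le_opNorm _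
      _ = ‖T‖ := by rw [hne]; ring
  -- fibers: finite subsets have card ≤ N
  set N : ℕ := ⌈(‖T‖ / δ) ^ (2:ℕ)⌉₊ with hN
  set F : τ → Set τ := fun β => {α | φ α = β ∧ u α ≠ 0} with hF
  have hcard : ∀ β (s : Finset τ), (↑s ⊆ F β) → s.card ≤ N := by
    intro β s hs
    have key : (s.card : ℝ) * δ ^ (2:ℕ) ≤ ‖T‖ ^ (2:ℕ) := by
      have h1 : ∀ a ∈ s, δ ^ (2:ℕ) ≤ ‖(T (e β)) a‖ ^ (2:ℝ) := by
        intro a ha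
        obtain ⟨hφ, hu⟩ := hs ha
        rw [hTe, if_pos hφ]
        rw [← Real.rpow_natCast δ 2]
        exact Real.rpow_le_rpow (le_of_lt hδ) (hδ' a hu) (by norm_num)
      calc (s.card : ℝ) * δ ^ (2:ℕ) = ∑ _a ∈ s, δ ^ (2:ℕ) := by
            rw [Finset.sum_const, nsmul_eq_mul]
        _ ≤ ∑ a ∈ s, ‖(T (e β)) a‖ ^ (2:ℝ) := Finset.sum_le_sum h1
        _ ≤ ‖T (e β)‖ ^ (2:ℝ) := by
            have := lp.sum_rpow_le_norm_rpow (p := 2) (E := fun _ : τ => ℂ)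
              (by norm_num) (T (e β)) s
            simpa using this
        _ ≤ (‖T‖ * ‖e β‖) ^ (2:ℝ) :=
            Real.rpow_le_rpow (norm_nonneg _) (T.le_opNorm _) (by norm_num)
        _ = ‖T‖ ^ (2:ℕ) := by
            rw [hne, mul_one, Real.rpow_two]
    have h2 : (s.card : ℝ) ≤ (‖T‖ / δ) ^ (2:ℕ) := by
      rw [div_pow]
      rw [le_div_iff₀ (by positivity)]
      exact key
    exact_mod_cast h2.trans (Nat.le_ceil _)
  have hfin : ∀ β, (F β).Finite := by
    intro β
    by_contra hinf
    obtain ⟨s, hsub, hcards⟩ :=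
      Set.Infinite.exists_subset_card_eq (hinf : (F β).Infinite) (N + 1)
    have := hcard β s hsub
    omega
  set M : ℕ := N + 1 with hM
  set G : τ → Finset τ := fun β => (hfin β).toFinset with hG
  have hGF : ∀ β, ↑(G β) = F β := fun β => (hfin β).coe_toFinset
  have hmemG : ∀ β α, α ∈ G β ↔ (φ α = β ∧ u α ≠ 0) := by
    intro β α
    rw [← Finset.mem_coe, hGF]; exact Iff.rfl
  set c : τ → ℕ := fun β => (G β).card with hc
  have hcM : ∀ β, c β ≤ N := fun β => hcard β (G β) (by rw [hGF])
  set eqv : ∀ β, (G β) ≃ Fin (c β) := fun β => (G β).equivFin with heqv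
  have hsymm_mem : ∀ (β : τ) (j : Fin (c β)), (((eqv β).symm j : G β) : τ) ∈ G β :=
    fun β j => ((eqv β).symm j).2
  set ψ : Fin M → τ → τ := fun k β =>
    if h : (k:ℕ) < c β then (((eqv β).symm ⟨k, h⟩ : G β) : τ) else Classical.arbitrary τ
    with hψ
  set v : Fin M → τ → ℂ := fun k β =>
    if h : (k:ℕ) < c β then conj (u (((eqv β).symm ⟨k, h⟩ : G β) : τ)) else 0 with hv
  have hvA : ∀ k β, v k β ∈ A ∪ {0} := by
    intro k β
    rw [hv]
    dsimp only
    split_ifs with h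
    · obtain ⟨-, hu⟩ := (hmemG β _).mp (hsymm_mem β ⟨k, h⟩)
      rcases huA (((eqv β).symm ⟨k, h⟩ : G β) : τ) with h' | h'
      · exact Or.inl (hconj _ h')
      · exact absurd h' hu
    · exact Or.inr rfl
  have hvb : ∀ k β, ‖v k β‖ ≤ ‖T‖ := by
    intro k β
    rw [hv]; dsimp only
    split_ifs with h
    · rw [RCLike.norm_conj]; exact hub _
    · rw [norm_zero]; exact norm_nonneg T
  have hψφ : ∀ k β, v k β ≠ 0 → φ (ψ k β) = β := by
    intro k β hne0
    rw [hv] at hne0; dsimp only at hne0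
    rw [hψ]; dsimp only
    by_cases h : (k:ℕ) < c β
    · rw [dif_pos h]
      exact ((hmemG β _).mp (hsymm_mem β ⟨k, h⟩)).1
    · rw [dif_neg h] at hne0; exact absurd rfl hne0
  have hinj : ∀ k : Fin M, Set.InjOn (ψ k) {β | v k β ≠ 0} := by
    intro k β hβ β' hβ' hψψ
    have h1 := hψφ k β hβ
    have h2 := hψφ k β' hβ'
    rw [hψψ] at h1
    rw [← h1, h2]
  have hSex : ∀ k : Fin M, ∃ S : Hsp τ →L[ℂ] Hsp τ,
      ∀ (x : Hsp τ) (β : τ), S x β = v k β * x (ψ k β) :=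
    fun k => exists_shift_clm (ψ k) (v k) ‖T‖ (norm_nonneg T) (hvb k) (hinj k)
  choose S hSx using hSex
  refine ⟨M, S, Nat.succ_pos N, fun k => ⟨ψ k, v k, hvA k, hSx k⟩, ?_⟩
  apply ContinuousLinearMap.ext
  intro y
  apply lp.ext
  funext β
  have hL : (ContinuousLinearMap.adjoint T y) β = ∑ α ∈ G β, conj (u α) * y α := by
    rw [coord_eq_inner _ β, ContinuousLinearMap.adjoint_inner_right, lp.inner_eq_tsum]
    have hterm : ∀ α, (inner ℂ ((T (e β)) α) (y α) : ℂ)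
        = conj ((T (e β)) α) * y α := fun α => RCLike.inner_apply' _ _
    rw [tsum_congr hterm]
    rw [tsum_eq_sum (s := G β) ?_]
    · refine Finset.sum_congr rfl ?_
      intro α hα
      obtain ⟨hφα, -⟩ := (hmemG β α).mp hα
      rw [hTe, if_pos hφα]
    · intro α hα
      rw [hTe]
      split_ifs with hφα
      · have : u α = 0 := by
          by_contra hu
          exact hα ((hmemG β α).mpr ⟨hφα, hu⟩)
        simp [this]
      · simp
  have hR : (((∑ k, S k) y : Hsp τ) : ∀ _ : τ, ℂ) β = ∑ α ∈ G β, conj (u α) * y α := by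
    rw [ContinuousLinearMap.sum_apply, lp_sum_apply]
    set f : ℕ → ℂ := fun k =>
      if h : k < c β then conj (u (((eqv β).symm ⟨k, h⟩ : G β) : τ))
        * y (((eqv β).symm ⟨k, h⟩ : G β) : τ) else 0 with hf
    have step1 : ∀ k : Fin M, (S k y) β = f (k : ℕ) := by
      intro k
      rw [hSx k y β, hf, hv, hψ]
      dsimp only
      by_cases h : (k:ℕ) < c β
      · rw [dif_pos h, dif_pos h, dif_pos h]
      · simp only [dif_neg h, zero_mul]
    rw [Finset.sum_congr rfl (fun k _ => step1 k), Fin.sum_univ_eq_sum_range f M]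
    rw [← Finset.sum_subset (Finset.range_subset_range.mpr (Nat.le_succ_of_le (hcM β)))
      (fun k _ hk => by
        rw [hf]; dsimp only
        rw [dif_neg (by simpa using hk)])]
    rw [← Fin.sum_univ_eq_sum_range f (c β)]
    have step2 : ∀ j : Fin (c β),
        f (j : ℕ) = conj (u (((eqv β).symm j : G β) : τ)) * y (((eqv β).symm j : G β) : τ) := by
      intro j
      rw [hf]; dsimp only
      rw [dif_pos j.2]
    rw [Finset.sum_congr rfl (fun j _ => step2 j)]
    rw [show (∑ j : Fin (c β), conj (u (((eqv β).symm j : G β) : τ)) * y (((eqv β).symm j : G β) : τ))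
        = ∑ a : G β, conj (u (a : τ)) * y (a : τ) from
      Equiv.sum_comp (eqv β).symm (fun a : G β => conj (u (a : τ)) * y (a : τ))]
    exact Finset.sum_coe_sort (G β) (fun α => conj (u α) * y α)
  rw [hL, ← hR]

lemma wgs_add_mem {τ : Type*} (A : Set ℂ)
    {T T' : lp (fun _ : τ => ℂ) 2 →L[ℂ] lp (fun _ : τ => ℂ) 2}
    (h : T ∈ WGSSemigroup (τ := τ) A) (h' : T' ∈ WGSSemigroup (τ := τ) A) :
    T + T' ∈ WGSSemigroup (τ := τ) A := by
  obtain ⟨m, S, hm, hS, rfl⟩ := h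
  obtain ⟨m', S', hm', hS', rfl⟩ := h'
  refine ⟨m + m', Fin.append S S', by omega, ?_, ?_⟩
  · intro i
    refine Fin.addCases (fun j => ?_) (fun j => ?_) i
    · rw [Fin.append_left]; exact hS j
    · rw [Fin.append_right]; exact hS' j
  · rw [Fin.sum_univ_add]
    congr 1
    · exact Finset.sum_congr rfl (fun j _ => (Fin.append_left S S' j).symm)
    · exact Finset.sum_congr rfl (fun j _ => (Fin.append_right S S' j).symm)

lemma wgs_sum_mem {τ : Type*} (A : Set ℂ) (m : ℕ) (hm : 0 < m)
    (f : Fin m → (lp (fun _ : τ => ℂ) 2 →L[ℂ] lp (fun _ : τ => ℂ) 2))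
    (hf : ∀ i, f i ∈ WGSSemigroup (τ := τ) A) :
    ∑ i, f i ∈ WGSSemigroup (τ := τ) A := by
  induction m with
  | zero => omega
  | succ n ih =>
    rcases Nat.eq_zero_or_pos n with hn | hn
    · subst hn
      simpa using hf 0
    · rw [Fin.sum_univ_castSucc]
      exact wgs_add_mem A (ih hn _ (fun i => hf i.castSucc)) (hf (Fin.last n))

/-- If `A ⊆ ℂ` is nonempty, conjugate invariant and `0` is not a limit point
of `A`, then the additive semigroup generated by `A ∪ {0}`-weighted generalized shift operators
on `ℓ²(τ)` is adjoint invariant. -/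
theorem wgs_semigroup_adjoint_invariant_of_zero_not_limit {τ : Type*} [Nonempty τ]
    (A : Set ℂ) (hA : A.Nonempty) (hconj : ∀ z ∈ A, (starRingEnd ℂ) z ∈ A)
    (δ : ℝ) (hδ : 0 < δ) (h0 : ∀ z ∈ A, z = 0 ∨ δ ≤ ‖z‖) :
    ∀ T ∈ WGSSemigroup (τ := τ) (A ∪ {0}),
      ContinuousLinearMap.adjoint T ∈ WGSSemigroup (τ := τ) (A ∪ {0}) := by
  intro T hT
  obtain ⟨m, S, hm, hS, rfl⟩ := hT
  rw [map_sum]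
  exact wgs_sum_mem _ m hm _
    (fun i => adjoint_single_mem A hconj δ hδ h0 (S i) (hS i))

end
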